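/- arXiv:2601.05349 — 3 statements merged into one kernel-verified Lean document; each statement's English description precedes it below -/
import Mathlib

section
/- The function W(x) = 1/(1 + |x|/2) on ℝ³ satisfies the elliptic equation ΔW + |x|⁻¹ W³ = 0 at every point x ≠ 0. -/
noncomputable section

abbrev E3 := EuclideanSpace ℝ (Fin 3)

def W (x : E3) : ℝ := (1 + ‖x‖ / 2)⁻¹

def lap (f : E3 → ℝ) (x : E3) : ℝ :=
  ∑ i : Fin 3,
    fderiv ℝ (fun y => fderiv ℝ f y (EuclideanSpace.single i 1)) x (EuclideanSpace.single i 1)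

open scoped RealInnerProductSpace

lemma hasFDerivAt_norm' (x : E3) (hx : x ≠ 0) :
    HasFDerivAt (fun y : E3 => ‖y‖) (‖x‖⁻¹ • innerSL ℝ x) x := by
  have hsq : HasFDerivAt (fun y : E3 => ‖y‖ ^ 2) (2 • innerSL ℝ x) x :=
    (hasStrictFDerivAt_norm_sq x).hasFDerivAt
  have hpos : (0:ℝ) < ‖x‖ ^ 2 := pow_pos (norm_pos_iff.mpr hx) 2
  have hs : HasDerivAt Real.sqrt (1 / (2 * Real.sqrt (‖x‖ ^ 2))) (‖x‖ ^ 2) :=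
    Real.hasDerivAt_sqrt (ne_of_gt hpos)
  have h := hs.comp_hasFDerivAt x hsq
  have heq : (fun y : E3 => Real.sqrt (‖y‖ ^ 2)) = fun y : E3 => ‖y‖ := by
    funext y; rw [Real.sqrt_sq (norm_nonneg y)]
  rw [show (Real.sqrt ∘ fun y : E3 => ‖y‖ ^ 2) = fun y : E3 => ‖y‖ by
      funext y; simp [Function.comp, Real.sqrt_sq (norm_nonneg y)]] at h
  refine h.congr_fderiv ?_
  rw [Real.sqrt_sq (norm_nonneg x)]
  ext v
  simp only [ContinuousLinearMap.smul_apply, ContinuousLinearMap.smul_apply]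
  have hnx : ‖x‖ ≠ 0 := norm_ne_zero_iff.mpr hx
  simp only [smul_eq_mul]
  field_simp
  ring

/-- the radial coefficient of the gradient of W -/
def cc (t : ℝ) : ℝ := -(1/2) / (1 + t/2)^2 * t⁻¹

lemma one_add_half_ne (t : ℝ) (ht : 0 ≤ t) : 1 + t/2 ≠ 0 := by positivity

lemma hasFDerivAt_W (y : E3) (hy : y ≠ 0) :
    HasFDerivAt W (cc ‖y‖ • innerSL ℝ y) y := by
  have hg : HasDerivAt (fun t : ℝ => (1 + t/2)⁻¹) (-(1/2) / (1 + ‖y‖/2)^2) ‖y‖ := by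
    have h1 : HasDerivAt (fun t : ℝ => 1 + t/2) (1/2) ‖y‖ := by
      simpa using ((hasDerivAt_id ‖y‖).div_const 2).const_add 1
    have := h1.inv (one_add_half_ne _ (norm_nonneg y))
    exact this
  have h := hg.comp_hasFDerivAt y (hasFDerivAt_norm' y hy)
  have hW : ((fun t : ℝ => (1 + t/2)⁻¹) ∘ fun y : E3 => ‖y‖) = W := rfl
  rw [hW] at h
  refine h.congr_fderiv ?_
  rw [smul_smul]
  congr 1

lemma fderiv_W_apply (y : E3) (hy : y ≠ 0) (i : Fin 3) :
    fderiv ℝ W y (EuclideanSpace.single i 1) = cc ‖y‖ * y i := by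
  rw [(hasFDerivAt_W y hy).fderiv]
  simp only [ContinuousLinearMap.smul_apply, smul_eq_mul]
  congr 1
  have := EuclideanSpace.inner_single_right (𝕜 := ℝ) i 1 y
  simpa using this

lemma hasDerivAt_cc (t : ℝ) (ht : 0 < t) :
    HasDerivAt cc ((1/2) / (1 + t/2)^3 * t⁻¹ + (1/2) / (1 + t/2)^2 * t⁻¹^2) t := by
  have h0 : (1 + t/2) ≠ 0 := one_add_half_ne t ht.le
  have h1 : HasDerivAt (fun s : ℝ => 1 + s/2) (1/2) t := by
    simpa using ((hasDerivAt_id t).div_const 2).const_add 1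
  have h2 : HasDerivAt (fun s : ℝ => (1 + s/2)^2) (2 * (1 + t/2) * (1/2)) t := by
    simpa using h1.fun_pow 2
  have h3 : HasDerivAt (fun s : ℝ => (1 + s/2)^2 * s)
      ((2 * (1 + t/2) * (1/2)) * t + (1 + t/2)^2 * 1) t := h2.mul (hasDerivAt_id t)
  have hne : (1 + t/2)^2 * t ≠ 0 := mul_ne_zero (pow_ne_zero _ h0) ht.ne'
  have h4 := (h3.fun_inv hne).const_mul (-(1/2) : ℝ)
  have hfun : (fun s : ℝ => (-(1/2) : ℝ) * ((1 + s/2)^2 * s)⁻¹) = cc := by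
    funext s; unfold cc; rw [mul_inv]; ring
  rw [hfun] at h4
  refine h4.congr_deriv ?_
  field_simp

lemma hasFDerivAt_grad_coord (x : E3) (hx : x ≠ 0) (i : Fin 3) :
    HasFDerivAt (fun y : E3 => cc ‖y‖ * y i)
      ((cc ‖x‖) • (EuclideanSpace.proj i : E3 →L[ℝ] ℝ) +
        (x i) • (((1/2) / (1 + ‖x‖/2)^3 * ‖x‖⁻¹ + (1/2) / (1 + ‖x‖/2)^2 * ‖x‖⁻¹^2) •
          (‖x‖⁻¹ • innerSL ℝ x))) x := by
  have hr : (0:ℝ) < ‖x‖ := norm_pos_iff.mpr hx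
  have hc : HasFDerivAt (fun y : E3 => cc ‖y‖)
      (((1/2) / (1 + ‖x‖/2)^3 * ‖x‖⁻¹ + (1/2) / (1 + ‖x‖/2)^2 * ‖x‖⁻¹^2) •
        (‖x‖⁻¹ • innerSL ℝ x)) x :=
    (hasDerivAt_cc ‖x‖ hr).comp_hasFDerivAt x (hasFDerivAt_norm' x hx)
  have hcoord : HasFDerivAt (fun y : E3 => y i)
      (EuclideanSpace.proj i : E3 →L[ℝ] ℝ) x :=
    (EuclideanSpace.proj i : E3 →L[ℝ] ℝ).hasFDerivAt
  exact hc.mul hcoord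

lemma norm_sq_eq_sum (x : E3) : ∑ i, x i ^ 2 = ‖x‖ ^ 2 := by
  have := EuclideanSpace.norm_eq x
  rw [this, Real.sq_sqrt (by positivity)]
  simp [sq_abs]

theorem stmt_0 : ∀ x : E3, x ≠ 0 → lap W x + ‖x‖⁻¹ * (W x) ^ 3 = 0 := by
  intro x hx
  have hr : (0:ℝ) < ‖x‖ := norm_pos_iff.mpr hx
  have h0 : (1 + ‖x‖/2) ≠ 0 := one_add_half_ne _ hr.le
  have hev : ∀ i : Fin 3,
      (fun y : E3 => fderiv ℝ W y (EuclideanSpace.single i 1)) =ᶠ[nhds x]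
        (fun y : E3 => cc ‖y‖ * y i) := by
    intro i
    filter_upwards [IsOpen.mem_nhds isOpen_compl_singleton hx] with y hy
    exact fderiv_W_apply y hy i
  have key : ∀ i : Fin 3,
      fderiv ℝ (fun y : E3 => fderiv ℝ W y (EuclideanSpace.single i 1)) x
        (EuclideanSpace.single i 1)
      = cc ‖x‖ + x i * (((1/2) / (1 + ‖x‖/2)^3 * ‖x‖⁻¹
          + (1/2) / (1 + ‖x‖/2)^2 * ‖x‖⁻¹^2) * (‖x‖⁻¹ * x i)) := by
    intro i
    rw [Filter.EventuallyEq.fderiv_eq (hev i),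
      (hasFDerivAt_grad_coord x hx i).fderiv]
    have hproj : (EuclideanSpace.proj i : E3 →L[ℝ] ℝ) (EuclideanSpace.single i 1) = 1 := by
      simp
    have hinner : (innerSL ℝ x) (EuclideanSpace.single i 1) = x i := by
      simpa using EuclideanSpace.inner_single_right (𝕜 := ℝ) i 1 x
    simp only [ContinuousLinearMap.add_apply, ContinuousLinearMap.smul_apply,
      hproj, hinner, smul_eq_mul]
    ring
  unfold lap
  simp only [key]
  rw [Finset.sum_add_distrib]
  simp only [Finset.sum_const, Finset.card_univ, Fintype.card_fin, nsmul_eq_mul]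
  have hsum : ∑ i : Fin 3, x i * (((1/2) / (1 + ‖x‖/2)^3 * ‖x‖⁻¹
      + (1/2) / (1 + ‖x‖/2)^2 * ‖x‖⁻¹^2) * (‖x‖⁻¹ * x i))
      = ((1/2) / (1 + ‖x‖/2)^3 * ‖x‖⁻¹ + (1/2) / (1 + ‖x‖/2)^2 * ‖x‖⁻¹^2)
        * ‖x‖⁻¹ * ‖x‖^2 := by
    rw [← norm_sq_eq_sum, Finset.mul_sum]
    congr 1; funext i; ring
  rw [hsum]
  unfold cc W
  field_simp
  ring
end
end

section
/- For W(x) = 1/(1 + |x|/2) on ℝ³, one has the Pohozaev-type identities ∫_{ℝ³} |∇W(x)|² dx = 8π/3 and ∫_{ℝ³} |x|⁻¹ W(x)⁴ dx = 8π/3. -/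
open MeasureTheory Real

noncomputable section

open Set Filter in
lemma tendsto_aux' : Filter.Tendsto (fun r : ℝ => (1 + r/2)⁻¹) Filter.atTop (nhds 0) := by
  apply Filter.Tendsto.comp tendsto_inv_atTop_zero
  apply Filter.tendsto_atTop_add_const_left
  exact Tendsto.atTop_div_const (by norm_num) tendsto_id

open Set Filter in
lemma oneD1' : ∫ y in Ioi (0:ℝ), y ^ 2 • ((1/4) * ((1 + y/2)⁻¹) ^ 4) = 2/3 := by
  have key : ∀ y : ℝ, y ∈ Ici (0:ℝ) →
      HasDerivAt (fun r : ℝ => 2 * (-(1 + r/2)⁻¹ + ((1 + r/2)⁻¹) ^ 2 - ((1 + r/2)⁻¹) ^ 3 / 3))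
        (y ^ 2 • ((1/4) * ((1 + y/2)⁻¹) ^ 4)) y := by
    intro y hy
    have hu : (1 + y/2) ≠ 0 := by simp at hy; nlinarith
    have hv : HasDerivAt (fun r : ℝ => (1 + r/2)⁻¹) (-(1/2) / (1 + y/2) ^ 2) y := by
      have h1 : HasDerivAt (fun r : ℝ => 1 + r/2) (1/2) y := by
        simpa using ((hasDerivAt_id y).div_const 2).const_add 1
      exact h1.inv hu
    have := (((hv.neg.add (hv.pow 2)).sub ((hv.pow 3).div_const 3)).const_mul 2)
    refine this.congr_deriv ?_
    symm
    simp only [smul_eq_mul]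
    have hyu : y = 2 * (1 + y/2) - 2 := by ring
    rw [hyu]
    generalize hU : (1 + y/2) = u at hu ⊢
    norm_num
    field_simp
    ring
  have lim : Filter.Tendsto
      (fun r : ℝ => 2 * (-(1 + r/2)⁻¹ + ((1 + r/2)⁻¹) ^ 2 - ((1 + r/2)⁻¹) ^ 3 / 3))
      Filter.atTop (nhds 0) := by
    have hv := tendsto_aux'
    have := ((hv.neg.add (hv.pow 2)).sub ((hv.pow 3).div_const 3)).const_mul 2
    simpa using this
  have := integral_Ioi_of_hasDerivAt_of_nonneg' key (fun y hy => by positivity) lim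
  rw [this]; norm_num

open Set Filter in
lemma oneD2' : ∫ y in Ioi (0:ℝ), y ^ 2 • (y⁻¹ * ((1 + y/2)⁻¹) ^ 4) = 2/3 := by
  have key : ∀ y : ℝ, y ∈ Ioi (0:ℝ) →
      HasDerivAt (fun r : ℝ => -2 * ((1 + r/2)⁻¹) ^ 2 + (4/3) * ((1 + r/2)⁻¹) ^ 3)
        (y ^ 2 • (y⁻¹ * ((1 + y/2)⁻¹) ^ 4)) y := by
    intro y hy
    have hy0 : (0:ℝ) < y := hy
    have hu : (1 + y/2) ≠ 0 := by nlinarith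
    have hv : HasDerivAt (fun r : ℝ => (1 + r/2)⁻¹) (-(1/2) / (1 + y/2) ^ 2) y := by
      have h1 : HasDerivAt (fun r : ℝ => 1 + r/2) (1/2) y := by
        simpa using ((hasDerivAt_id y).div_const 2).const_add 1
      exact h1.inv hu
    have := ((hv.pow 2).const_mul (-2:ℝ)).add ((hv.pow 3).const_mul (4/3:ℝ))
    refine this.congr_deriv ?_
    symm
    simp only [smul_eq_mul]
    rw [pow_two, mul_assoc, mul_inv_cancel_left₀ hy0.ne']
    have hyu : y = 2 * (1 + y/2) - 2 := by ring
    rw [hyu]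
    generalize hU : (1 + y/2) = u at hu ⊢
    rw [show (1:ℝ) + (2 * u - 2) / 2 = u by ring]
    norm_num
    field_simp
    ring
  have hcont : ContinuousWithinAt
      (fun r : ℝ => -2 * ((1 + r/2)⁻¹) ^ 2 + (4/3) * ((1 + r/2)⁻¹) ^ 3) (Ici 0) 0 := by
    apply ContinuousAt.continuousWithinAt
    fun_prop (disch := norm_num)
  have lim : Filter.Tendsto
      (fun r : ℝ => -2 * ((1 + r/2)⁻¹) ^ 2 + (4/3) * ((1 + r/2)⁻¹) ^ 3)
      Filter.atTop (nhds 0) := by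
    have hv := tendsto_aux'
    have := ((hv.pow 2).const_mul (-2:ℝ)).add ((hv.pow 3).const_mul (4/3:ℝ))
    simpa using this
  have := integral_Ioi_of_hasDerivAt_of_nonneg hcont key (fun y hy => by
    have : (0:ℝ) < y := hy; positivity) lim
  rw [this]; norm_num

lemma grad_W' {x : E3} (hx : x ≠ 0) :
    HasGradientAt W ((-(1/2) * ((1 + ‖x‖/2)⁻¹) ^ 2 * ‖x‖⁻¹) • x) x := by
  have hnx : ‖x‖ ≠ 0 := norm_ne_zero_iff.mpr hx
  have hnxp : (0:ℝ) < ‖x‖ := norm_pos_iff.mpr hx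
  have hu : (1 + ‖x‖/2) ≠ 0 := by positivity
  have hsq : HasFDerivAt (fun y : E3 => ‖y‖ ^ 2) (2 • innerSL ℝ x) x :=
    (hasStrictFDerivAt_norm_sq x).hasFDerivAt
  have hsqrt : HasDerivAt Real.sqrt (1 / (2 * Real.sqrt (‖x‖ ^ 2))) (‖x‖ ^ 2) :=
    Real.hasDerivAt_sqrt (by positivity)
  have hnorm : HasFDerivAt (fun y : E3 => ‖y‖)
      ((1 / (2 * ‖x‖)) • (2 • innerSL ℝ x)) x := by
    have h := hsqrt.comp_hasFDerivAt x hsq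
    have hs : Real.sqrt (‖x‖ ^ 2) = ‖x‖ := Real.sqrt_sq (norm_nonneg x)
    rw [hs] at h
    have hfe : (fun y : E3 => ‖y‖) = fun y : E3 => Real.sqrt (‖y‖ ^ 2) := by
      funext y; rw [Real.sqrt_sq (norm_nonneg y)]
    rw [hfe]
    exact h
  have hf : HasDerivAt (fun r : ℝ => (1 + r/2)⁻¹) (-(1/2) / (1 + ‖x‖/2) ^ 2) ‖x‖ := by
    have h1 : HasDerivAt (fun r : ℝ => 1 + r/2) (1/2) ‖x‖ := by
      simpa using ((hasDerivAt_id ‖x‖).div_const 2).const_add 1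
    exact h1.inv hu
  have hW : HasFDerivAt W
      ((-(1/2) / (1 + ‖x‖/2) ^ 2) • ((1 / (2 * ‖x‖)) • (2 • innerSL ℝ x))) x :=
    hf.comp_hasFDerivAt x hnorm
  rw [hasGradientAt_iff_hasFDerivAt]
  refine hW.congr_fderiv ?_
  symm
  ext y
  simp only [InnerProductSpace.toDual_apply_apply, ContinuousLinearMap.smul_apply,
    ContinuousLinearMap.coe_smul', Pi.smul_apply, innerSL_apply_apply, real_inner_smul_left,
    smul_eq_mul]
  rw [inv_pow]
  field_simp
  ring

lemma ball_vol' : ((volume (Metric.ball (0:E3) 1)).toReal) = 4 * π / 3 := by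
  rw [EuclideanSpace.volume_ball]
  have h32 : ((Fintype.card (Fin 3) : ℝ) / 2 + 1) = 3/2 + 1 := by
    simp [Fintype.card_fin]
  rw [h32]
  have hG : Real.Gamma (3/2 + 1) = 3/4 * Real.sqrt π := by
    rw [Real.Gamma_add_one (by norm_num)]
    have h12 : (3:ℝ)/2 = 1/2 + 1 := by norm_num
    rw [h12, Real.Gamma_add_one (by norm_num), Real.Gamma_one_half_eq]
    ring
  rw [hG]
  have hs0 : Real.sqrt π ≠ 0 := by positivity
  have hs2 : Real.sqrt π ^ 2 = π := Real.sq_sqrt pi_nonneg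
  have hval : Real.sqrt π ^ Fintype.card (Fin 3) / (3/4 * Real.sqrt π) = 4 * π / 3 := by
    have h3 : Real.sqrt π ^ 3 = π * Real.sqrt π := by rw [pow_succ, hs2]
    simp only [Fintype.card_fin]
    rw [h3]
    field_simp
  rw [hval]
  simp [ENNReal.toReal_mul, ENNReal.toReal_ofReal (by positivity : (0:ℝ) ≤ 4 * π / 3)]

theorem stmt_1 :
    (∫ x : E3, ‖gradient W x‖ ^ 2) = 8 * π / 3 ∧
    (∫ x : E3, ‖x‖⁻¹ * (W x) ^ 4) = 8 * π / 3 := by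
  have hdim : Module.finrank ℝ E3 = 3 := finrank_euclideanSpace_fin
  constructor
  · have hae : (fun x : E3 => ‖gradient W x‖ ^ 2) =ᵐ[volume]
        (fun x : E3 => (1/4) * ((1 + ‖x‖/2)⁻¹) ^ 4) := by
      have h0 : (volume : Measure E3) {0} = 0 := measure_singleton 0
      rw [Filter.eventuallyEq_iff_exists_mem]
      refine ⟨{(0:E3)}ᶜ, ?_, ?_⟩
      · rw [mem_ae_iff]; simpa using h0
      · intro x hx
        have hx0 : x ≠ 0 := hx
        have hg := (grad_W' hx0).gradient
        dsimp only
        rw [hg, norm_smul]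
        have hnx : ‖x‖ ≠ 0 := norm_ne_zero_iff.mpr hx0
        have hu : (0:ℝ) < 1 + ‖x‖/2 := by positivity
        rw [Real.norm_eq_abs]
        have habs : |(-(1/2) * ((1 + ‖x‖/2)⁻¹) ^ 2 * ‖x‖⁻¹ : ℝ)| =
            (1/2) * ((1 + ‖x‖/2)⁻¹) ^ 2 * ‖x‖⁻¹ := by
          rw [abs_of_nonpos (by nlinarith [sq_nonneg ((1 + ‖x‖/2)⁻¹), inv_nonneg.mpr (norm_nonneg x), mul_nonneg (sq_nonneg ((1 + ‖x‖/2)⁻¹)) (inv_nonneg.mpr (norm_nonneg x))] : -(1/2) * ((1 + ‖x‖/2)⁻¹) ^ 2 * ‖x‖⁻¹ ≤ 0)]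
          ring
        rw [habs]
        field_simp
        ring
    rw [integral_congr_ae hae]
    have h := integral_fun_norm_addHaar (volume : Measure E3)
      (fun r : ℝ => (1/4) * ((1 + r/2)⁻¹) ^ 4)
    have h2 : (∫ x : E3, (1/4) * ((1 + ‖x‖/2)⁻¹) ^ 4) = _ := h
    rw [h2, hdim, measureReal_def, ball_vol', oneD1']
    simp only [smul_eq_mul, nsmul_eq_mul]
    push_cast
    ring
  · have h := integral_fun_norm_addHaar (volume : Measure E3)
      (fun r : ℝ => r⁻¹ * ((1 + r/2)⁻¹) ^ 4)
    have h2 : (∫ x : E3, ‖x‖⁻¹ * (W x) ^ 4) = _ := h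
    rw [h2, hdim, measureReal_def, ball_vol', oneD2']
    simp only [smul_eq_mul, nsmul_eq_mul]
    push_cast
    ring
end
end

section
/- For W(x) = 1/(1 + |x|/2) on ℝ³, the energy E[W] := (1/2)∫|∇W|² dx − (1/4)∫|x|⁻¹W⁴ dx equals 2π/3. -/
open MeasureTheory Real

noncomputable section

def energy (u : E3 → ℝ) : ℝ :=
  (1 / 2) * (∫ x : E3, ‖gradient u x‖ ^ 2) - (1 / 4) * (∫ x : E3, ‖x‖⁻¹ * |u x| ^ 4)

lemma base_pos {r : ℝ} (hr : 0 ≤ r) : 0 < 1 + r / 2 := by linarith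

lemma hasDerivAt_base (r : ℝ) : HasDerivAt (fun s : ℝ => 1 + s / 2) (1 / 2) r := by
  simpa using ((hasDerivAt_id r).div_const 2).const_add 1

lemma hasDerivAt_inv_base {r : ℝ} (hr : 0 ≤ r) :
    HasDerivAt (fun s : ℝ => (1 + s / 2)⁻¹) (-(1 / 2) / (1 + r / 2) ^ 2) r :=
  (hasDerivAt_base r).inv (base_pos hr).ne'

lemma tendsto_inv_base : Filter.Tendsto (fun s : ℝ => (1 + s / 2)⁻¹)
    Filter.atTop (nhds 0) := by
  apply Filter.Tendsto.comp tendsto_inv_atTop_zero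
  exact Filter.tendsto_atTop_add_const_left _ 1 (Filter.tendsto_id.atTop_div_const two_pos)

/-- gradient norm formula for `W` away from the origin -/
lemma norm_gradient_W {x : E3} (hx : x ≠ 0) :
    ‖gradient W x‖ = (1 / 2) * ((1 + ‖x‖ / 2)⁻¹) ^ 2 := by
  have hnx : (0 : ℝ) < ‖x‖ := norm_pos_iff.mpr hx
  -- derivative of the norm
  have hsq : HasFDerivAt (fun y : E3 => ‖y‖ ^ 2) (2 • (innerSL ℝ x)) x :=
    (hasStrictFDerivAt_norm_sq x).hasFDerivAt
  have hsqrt : HasDerivAt Real.sqrt (1 / (2 * Real.sqrt (‖x‖ ^ 2))) (‖x‖ ^ 2) :=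
    Real.hasDerivAt_sqrt (by positivity)
  have hnorm : HasFDerivAt (fun y : E3 => ‖y‖) (‖x‖⁻¹ • (innerSL ℝ x)) x := by
    have h := hsqrt.comp_hasFDerivAt x hsq
    have hfun : (fun y : E3 => Real.sqrt (‖y‖ ^ 2)) = fun y : E3 => ‖y‖ := by
      funext y; rw [Real.sqrt_sq (norm_nonneg y)]
    have h2 : HasFDerivAt (fun y : E3 => Real.sqrt (‖y‖ ^ 2))
        ((1 / (2 * Real.sqrt (‖x‖ ^ 2))) • (2 • (innerSL ℝ x))) x := h
    rw [hfun] at h2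
    refine h2.congr_fderiv ?_
    rw [Real.sqrt_sq (norm_nonneg x)]
    ext y
    simp only [ContinuousLinearMap.coe_smul', Pi.smul_apply, smul_eq_mul,
      ContinuousLinearMap.smul_apply]
    have : ‖x‖ ≠ 0 := hnx.ne'
    field_simp
    ring
  have hg : HasDerivAt (fun s : ℝ => (1 + s / 2)⁻¹)
      (-(1 / 2) / (1 + ‖x‖ / 2) ^ 2) ‖x‖ := hasDerivAt_inv_base (norm_nonneg x)
  have hW : HasFDerivAt W
      ((-(1 / 2) / (1 + ‖x‖ / 2) ^ 2) • (‖x‖⁻¹ • (innerSL ℝ x))) x :=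
    hg.comp_hasFDerivAt x hnorm
  have hfd : fderiv ℝ W x = (-(1 / 2) / (1 + ‖x‖ / 2) ^ 2) • (‖x‖⁻¹ • (innerSL ℝ x)) :=
    hW.fderiv
  have h1 : ‖gradient W x‖ = ‖fderiv ℝ W x‖ := by
    rw [gradient, LinearIsometryEquiv.norm_map]
  have hb : (0 : ℝ) < 1 + ‖x‖ / 2 := base_pos (norm_nonneg x)
  rw [h1, hfd, norm_smul, norm_smul, innerSL_apply_norm, norm_inv, norm_norm,
    inv_mul_cancel₀ hnx.ne', mul_one, Real.norm_eq_abs, abs_div, abs_neg,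
    abs_of_nonneg (by norm_num : (0:ℝ) ≤ (1:ℝ)/2),
    abs_of_nonneg (by positivity : (0:ℝ) ≤ (1 + ‖x‖ / 2) ^ 2)]
  field_simp

lemma integral_radial_one :
    ∫ y in Set.Ioi (0 : ℝ), y ^ 2 • ((1 / 4) * ((1 + y / 2)⁻¹) ^ 4) = 2 / 3 := by
  have key : ∀ r ∈ Set.Ici (0 : ℝ),
      HasDerivAt (fun s : ℝ => 2 * (-(1 + s / 2)⁻¹ + ((1 + s / 2)⁻¹) ^ 2
        - (1 / 3) * ((1 + s / 2)⁻¹) ^ 3))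
        (r ^ 2 • ((1 / 4) * ((1 + r / 2)⁻¹) ^ 4)) r := by
    intro r hr
    have hb : (0 : ℝ) < 1 + r / 2 := base_pos hr
    have hi := hasDerivAt_inv_base hr
    have h := (((hi.neg).add (hi.pow 2)).sub ((hi.pow 3).const_mul (1/3))).const_mul 2
    refine h.congr_deriv ?_
    set u := 1 + r / 2 with hudef
    have hu : u ≠ 0 := hb.ne'
    have hr2 : r = 2 * u - 2 := by rw [hudef]; ring
    rw [smul_eq_mul, hr2]
    field_simp
    ring_nf
    field_simp
    ring
  have hnn : ∀ r ∈ Set.Ioi (0 : ℝ),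
      0 ≤ r ^ 2 • ((1 / 4) * ((1 + r / 2)⁻¹) ^ 4) := by
    intro r hr
    have : (0:ℝ) < r := hr
    simp only [smul_eq_mul]
    positivity
  have hlim : Filter.Tendsto (fun s : ℝ => 2 * (-(1 + s / 2)⁻¹ + ((1 + s / 2)⁻¹) ^ 2
      - (1 / 3) * ((1 + s / 2)⁻¹) ^ 3)) Filter.atTop (nhds 0) := by
    have hc : Continuous (fun v : ℝ => 2 * (-v + v ^ 2 - (1 / 3) * v ^ 3)) := by continuity
    have := (hc.tendsto 0).comp tendsto_inv_base
    simpa [Function.comp_def] using this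
  have := integral_Ioi_of_hasDerivAt_of_nonneg' key hnn hlim
  rw [this]
  norm_num

lemma integral_radial_two :
    ∫ y in Set.Ioi (0 : ℝ), y ^ 2 • (y⁻¹ * ((1 + y / 2)⁻¹) ^ 4) = 2 / 3 := by
  have hcongr : ∀ y ∈ Set.Ioi (0 : ℝ),
      y ^ 2 • (y⁻¹ * ((1 + y / 2)⁻¹) ^ 4) = y * ((1 + y / 2)⁻¹) ^ 4 := by
    intro y hy
    have hy' : (0:ℝ) < y := hy
    simp only [smul_eq_mul]
    field_simp
  rw [setIntegral_congr_fun measurableSet_Ioi hcongr]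
  have key : ∀ r ∈ Set.Ici (0 : ℝ),
      HasDerivAt (fun s : ℝ => 4 * (-(1 / 2) * ((1 + s / 2)⁻¹) ^ 2
        + (1 / 3) * ((1 + s / 2)⁻¹) ^ 3))
        (r * ((1 + r / 2)⁻¹) ^ 4) r := by
    intro r hr
    have hb : (0 : ℝ) < 1 + r / 2 := base_pos hr
    have hi := hasDerivAt_inv_base hr
    have h := (((hi.pow 2).const_mul (-(1/2))).add ((hi.pow 3).const_mul (1/3))).const_mul 4
    refine h.congr_deriv ?_
    set u := 1 + r / 2 with hudef
    have hu : u ≠ 0 := hb.ne'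
    have hr2 : r = 2 * u - 2 := by rw [hudef]; ring
    rw [hr2]
    field_simp
    ring_nf
    field_simp
    ring
  have hnn : ∀ r ∈ Set.Ioi (0 : ℝ), 0 ≤ r * ((1 + r / 2)⁻¹) ^ 4 := by
    intro r hr
    have : (0:ℝ) < r := hr
    positivity
  have hlim : Filter.Tendsto (fun s : ℝ => 4 * (-(1 / 2) * ((1 + s / 2)⁻¹) ^ 2
      + (1 / 3) * ((1 + s / 2)⁻¹) ^ 3)) Filter.atTop (nhds 0) := by
    have hc : Continuous (fun v : ℝ => 4 * (-(1 / 2) * v ^ 2 + (1 / 3) * v ^ 3)) := by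
      continuity
    have := (hc.tendsto 0).comp tendsto_inv_base
    simpa [Function.comp_def] using this
  have := integral_Ioi_of_hasDerivAt_of_nonneg' key hnn hlim
  rw [this]
  norm_num

lemma volume_ball_E3 : (volume (Metric.ball (0 : E3) 1)).toReal = 4 * π / 3 := by
  rw [EuclideanSpace.volume_ball]
  have hcard : Fintype.card (Fin 3) = 3 := by simp
  rw [hcard]
  have hG : Real.Gamma ((3 : ℕ) / 2 + 1) = 3 / 4 * Real.sqrt π := by
    have h32 : ((3 : ℕ) : ℝ) / 2 + 1 = (1 / 2 + 1) + 1 := by norm_num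
    rw [h32, Real.Gamma_add_one (by norm_num), Real.Gamma_add_one (by norm_num),
      Real.Gamma_one_half_eq]
    ring
  rw [hG]
  have hsp : (0:ℝ) < Real.sqrt π := Real.sqrt_pos.mpr pi_pos
  have hval : Real.sqrt π ^ 3 / (3 / 4 * Real.sqrt π) = 4 * π / 3 := by
    have h3 : Real.sqrt π ^ 3 = π * Real.sqrt π := by
      rw [pow_succ, Real.sq_sqrt pi_pos.le]
    rw [h3]
    field_simp
  rw [hval]
  simp [ENNReal.toReal_ofReal (by positivity : (0:ℝ) ≤ 4 * π / 3)]

theorem stmt_2 : energy W = 2 * π / 3 := by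
  have h0 : ∀ᵐ x : E3 ∂volume, x ≠ 0 := by
    refine ae_iff.mpr ?_
    have : {x : E3 | ¬ x ≠ 0} = {0} := by ext x; simp
    rw [this]
    exact measure_singleton 0
  have I1 : (∫ x : E3, ‖gradient W x‖ ^ 2) = 8 * π / 3 := by
    have hcongr : (∫ x : E3, ‖gradient W x‖ ^ 2)
        = ∫ x : E3, (fun r : ℝ => (1 / 4) * ((1 + r / 2)⁻¹) ^ 4) ‖x‖ := by
      refine integral_congr_ae ?_
      filter_upwards [h0] with x hx
      rw [norm_gradient_W hx]
      ring
    rw [hcongr, integral_fun_norm_addHaar volume (fun r : ℝ => (1 / 4) * ((1 + r / 2)⁻¹) ^ 4)]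
    rw [finrank_euclideanSpace_fin]
    norm_num only
    rw [measureReal_def, volume_ball_E3, integral_radial_one]
    simp only [nsmul_eq_mul, smul_eq_mul]
    push_cast
    ring
  have I2 : (∫ x : E3, ‖x‖⁻¹ * |W x| ^ 4) = 8 * π / 3 := by
    have hcongr : (fun x : E3 => ‖x‖⁻¹ * |W x| ^ 4)
        = fun x : E3 => (fun r : ℝ => r⁻¹ * ((1 + r / 2)⁻¹) ^ 4) ‖x‖ := by
      funext x
      have hb : (0:ℝ) < 1 + ‖x‖ / 2 := base_pos (norm_nonneg x)
      simp only [W, abs_of_nonneg (inv_nonneg.mpr hb.le)]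
    rw [hcongr, integral_fun_norm_addHaar volume (fun r : ℝ => r⁻¹ * ((1 + r / 2)⁻¹) ^ 4)]
    rw [finrank_euclideanSpace_fin]
    norm_num only
    rw [measureReal_def, volume_ball_E3, integral_radial_two]
    simp only [nsmul_eq_mul, smul_eq_mul]
    push_cast
    ring
  unfold energy
  rw [I1, I2]
  ring
end
end
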